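/- arXiv:1002.4060 — 2 statements merged into one kernel-verified Lean document; each statement's English description precedes it below -/
import Mathlib

section
/- The number of Yamanouchi words of length n on the alphabet {1,2,3} equals the n-th Motzkin number m_n. -/
open Finset

/-- The predicate cut out by `latticeCount`. -/
def QL (n h : ℕ) (l : List ℤ) : Prop :=
  l.length = n ∧ (∀ x ∈ l, x = 1 ∨ x = -1 ∨ x = 0) ∧
    (∀ m, 0 ≤ (h : ℤ) + (l.take m).sum) ∧ (h : ℤ) + l.sum = 0

/-- Finset of Motzkin-type paths from height `h` down to 0, length `n`. -/
def LF : ℕ → ℕ → Finset (List ℤ)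
  | 0, h => if h = 0 then {([] : List ℤ)} else ∅
  | n + 1, h =>
      ((LF n (h + 1)).image (List.cons 1)) ∪
      ((LF n h).image (List.cons 0)) ∪
      (if h = 0 then ∅ else (LF n (h - 1)).image (List.cons (-1)))

lemma QL_cons_of {n h h2 : ℕ} {x : ℤ} {t : List ℤ} (hx : x = 1 ∨ x = -1 ∨ x = 0)
    (hh : (h2 : ℤ) = (h : ℤ) + x) (ht : QL n h2 t) : QL (n + 1) h (x :: t) := by
  obtain ⟨hlen, hmem, hpre, hsum⟩ := ht
  refine ⟨by simp [hlen], ?_, ?_, ?_⟩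
  · intro y hy
    rcases List.mem_cons.1 hy with rfl | hy
    · exact hx
    · exact hmem y hy
  · intro m
    cases m with
    | zero => simp
    | succ m =>
      have := hpre m
      simp only [List.take_succ_cons, List.sum_cons]
      linarith
  · simp only [List.sum_cons]
    linarith

lemma QL_cons_iff (n h : ℕ) (x : ℤ) (t : List ℤ) :
    QL (n + 1) h (x :: t) ↔
      (x = 1 ∧ QL n (h + 1) t) ∨ (x = 0 ∧ QL n h t) ∨
        (x = -1 ∧ ∃ h', h = h' + 1 ∧ QL n h' t) := by
  constructor
  · rintro ⟨hlen, hmem, hpre, hsum⟩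
    have hx : x = 1 ∨ x = -1 ∨ x = 0 := hmem x List.mem_cons_self
    have hlen' : t.length = n := by simpa using hlen
    have hmem' : ∀ y ∈ t, y = 1 ∨ y = -1 ∨ y = 0 := fun y hy => hmem y (List.mem_cons_of_mem x hy)
    have hpre' : ∀ m, 0 ≤ (h : ℤ) + x + (t.take m).sum := by
      intro m
      have := hpre (m + 1)
      simp only [List.take_succ_cons, List.sum_cons] at this
      linarith
    have hsum' : (h : ℤ) + x + t.sum = 0 := by
      simp only [List.sum_cons] at hsum
      linarith
    rcases hx with rfl | rfl | rfl
    · refine Or.inl ⟨rfl, hlen', hmem', ?_, ?_⟩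
      · intro m
        have := hpre' m
        push_cast
        linarith
      · push_cast
        linarith
    · refine Or.inr (Or.inr ⟨rfl, ?_⟩)
      have h1 : 1 ≤ h := by
        have := hpre' 0
        simp at this
        omega
      obtain ⟨h', rfl⟩ : ∃ h', h = h' + 1 := ⟨h - 1, by omega⟩
      refine ⟨h', rfl, hlen', hmem', ?_, ?_⟩
      · intro m
        have := hpre' m
        push_cast at this ⊢
        linarith
      · push_cast at hsum' ⊢
        linarith
    · refine Or.inr (Or.inl ⟨rfl, hlen', hmem', ?_, ?_⟩)
      · intro m
        have := hpre' m
        linarith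
      · linarith
  · rintro (⟨rfl, ht⟩ | ⟨rfl, ht⟩ | ⟨rfl, h', rfl, ht⟩)
    · exact QL_cons_of (Or.inl rfl) (by push_cast; ring) ht
    · exact QL_cons_of (Or.inr (Or.inr rfl)) (by push_cast; ring) ht
    · exact QL_cons_of (Or.inr (Or.inl rfl)) (by push_cast; ring) ht

lemma mem_LF : ∀ (n h : ℕ) (l : List ℤ), l ∈ LF n h ↔ QL n h l := by
  intro n
  induction n with
  | zero =>
    intro h l
    constructor
    · intro hl
      by_cases h0 : h = 0
      · subst h0
        simp [LF] at hl
        subst hl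
        refine ⟨rfl, by simp, by simp, by simp⟩
      · simp [LF, h0] at hl
    · rintro ⟨hlen, _, _, hsum⟩
      have : l = [] := List.length_eq_zero_iff.mp hlen
      subst this
      simp at hsum
      norm_cast at hsum
      simp [LF, hsum]
  | succ n ih =>
    intro h l
    constructor
    · intro hl
      simp only [LF, mem_union] at hl
      rcases hl with (hl | hl) | hl
      · obtain ⟨t, ht, rfl⟩ := mem_image.1 hl
        exact QL_cons_of (Or.inl rfl) (by push_cast; ring) ((ih _ t).1 ht)
      · obtain ⟨t, ht, rfl⟩ := mem_image.1 hl
        exact QL_cons_of (Or.inr (Or.inr rfl)) (by push_cast; ring) ((ih _ t).1 ht)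
      · by_cases h0 : h = 0
        · simp [h0] at hl
        · rw [if_neg h0] at hl
          obtain ⟨t, ht, rfl⟩ := mem_image.1 hl
          refine QL_cons_of (Or.inr (Or.inl rfl)) ?_ ((ih _ t).1 ht)
          have : 1 ≤ h := Nat.one_le_iff_ne_zero.2 h0
          push_cast [Nat.cast_sub this]
          ring
    · intro hq
      cases l with
      | nil => exact absurd hq.1 (by simp)
      | cons x t =>
        rcases (QL_cons_iff n h x t).1 hq with ⟨rfl, ht⟩ | ⟨rfl, ht⟩ | ⟨rfl, h', rfl, ht⟩
        · simp only [LF, mem_union]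
          exact Or.inl (Or.inl (mem_image.2 ⟨t, (ih _ t).2 ht, rfl⟩))
        · simp only [LF, mem_union]
          exact Or.inl (Or.inr (mem_image.2 ⟨t, (ih _ t).2 ht, rfl⟩))
        · simp only [LF, mem_union]
          refine Or.inr ?_
          rw [if_neg (by omega)]
          exact mem_image.2 ⟨t, by simpa using (ih _ t).2 ht, rfl⟩

lemma disj_img (x y : ℤ) (hxy : x ≠ y) (s t : Finset (List ℤ)) :
    Disjoint (s.image (List.cons x)) (t.image (List.cons y)) := by
  rw [Finset.disjoint_left]
  rintro l hl hl'
  obtain ⟨u, _, rfl⟩ := mem_image.1 hl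
  obtain ⟨v, _, hv⟩ := mem_image.1 hl'
  simp only [List.cons.injEq] at hv
  exact hxy hv.1.symm

lemma cons_inj (x : ℤ) : Function.Injective (List.cons x) := fun a b h => by
  simpa using h

lemma LF_card (n h : ℕ) : (LF (n + 1) h).card =
    (LF n (h + 1)).card + (LF n h).card + (if h = 0 then 0 else (LF n (h - 1)).card) := by
  rw [LF]
  have d1 : Disjoint ((LF n (h + 1)).image (List.cons 1)) ((LF n h).image (List.cons 0)) :=
    disj_img _ _ (by norm_num) _ _
  have d2 : Disjoint (((LF n (h + 1)).image (List.cons 1)) ∪ ((LF n h).image (List.cons 0)))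
      (if h = 0 then ∅ else (LF n (h - 1)).image (List.cons (-1))) := by
    by_cases h0 : h = 0
    · simp [h0]
    · rw [if_neg h0, Finset.disjoint_union_left]
      exact ⟨disj_img _ _ (by norm_num) _ _, disj_img _ _ (by norm_num) _ _⟩
  rw [Finset.card_union_of_disjoint d2, Finset.card_union_of_disjoint d1,
    Finset.card_image_of_injective _ (cons_inj 1), Finset.card_image_of_injective _ (cons_inj 0)]
  by_cases h0 : h = 0
  · simp [h0]
  · rw [if_neg h0, if_neg h0, Finset.card_image_of_injective _ (cons_inj (-1))]


/-- number of positions `j < m` with `w j = v`. -/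
def cnt {n : ℕ} (w : Fin n → ℕ) (m v : ℕ) : ℕ :=
  (Finset.univ.filter fun j : Fin n => j.1 < m ∧ w j = v).card

/-- Yamanouchi with slack `a` (ones over twos) and `b` (twos over threes). -/
def QW (a b : ℕ) {n : ℕ} (w : Fin n → ℕ) : Prop :=
  (∀ j, w j = 1 ∨ w j = 2 ∨ w j = 3) ∧
  ∀ m, cnt w m 2 ≤ a + cnt w m 1 ∧ cnt w m 3 ≤ b + cnt w m 2

lemma cnt_zero {n : ℕ} (w : Fin n → ℕ) (v : ℕ) : cnt w 0 v = 0 := by simp [cnt]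

lemma cnt_cons {n : ℕ} (x : ℕ) (u : Fin n → ℕ) (m v : ℕ) :
    cnt (Fin.cons x u) (m + 1) v = (if x = v then 1 else 0) + cnt u m v := by
  simp only [cnt, Finset.card_filter]
  rw [Fin.sum_univ_succ]
  congr 1
  · simp
  · exact Finset.sum_congr rfl fun j _ => by simp [Fin.val_succ]

lemma QW_cons (a b x : ℕ) {n : ℕ} (u : Fin n → ℕ) :
    QW a b (Fin.cons x u) ↔
      (x = 1 ∧ QW (a + 1) b u) ∨
      (x = 2 ∧ ∃ a', a = a' + 1 ∧ QW a' (b + 1) u) ∨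
      (x = 3 ∧ ∃ b', b = b' + 1 ∧ QW a b' u) := by
  constructor
  · rintro ⟨hmem, hineq⟩
    have hmem' : ∀ j, u j = 1 ∨ u j = 2 ∨ u j = 3 := fun j => by
      simpa using hmem j.succ
    have hx := hmem 0
    simp only [Fin.cons_zero] at hx
    rcases hx with hx | hx | hx
    · refine Or.inl ⟨hx, hmem', fun m => ?_⟩
      have := hineq (m + 1)
      rw [cnt_cons, cnt_cons, cnt_cons] at this
      simp [hx] at this
      omega
    · refine Or.inr (Or.inl ⟨hx, ?_⟩)
      have ha : 1 ≤ a := by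
        have := (hineq 1).1
        rw [cnt_cons, cnt_cons, cnt_zero, cnt_zero] at this
        simp [hx] at this
        omega
      obtain ⟨a', rfl⟩ : ∃ a', a = a' + 1 := ⟨a - 1, by omega⟩
      refine ⟨a', rfl, hmem', fun m => ?_⟩
      have := hineq (m + 1)
      rw [cnt_cons, cnt_cons, cnt_cons] at this
      simp [hx] at this
      omega
    · refine Or.inr (Or.inr ⟨hx, ?_⟩)
      have hb : 1 ≤ b := by
        have := (hineq 1).2
        rw [cnt_cons, cnt_cons, cnt_zero, cnt_zero] at this
        simp [hx] at this
        omega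
      obtain ⟨b', rfl⟩ : ∃ b', b = b' + 1 := ⟨b - 1, by omega⟩
      refine ⟨b', rfl, hmem', fun m => ?_⟩
      have := hineq (m + 1)
      rw [cnt_cons, cnt_cons, cnt_cons] at this
      simp [hx] at this
      omega
  · have consmem : ∀ (y : ℕ), (y = 1 ∨ y = 2 ∨ y = 3) →
        (∀ j, u j = 1 ∨ u j = 2 ∨ u j = 3) →
        ∀ j : Fin (n+1), (Fin.cons y u : Fin (n+1) → ℕ) j = 1 ∨
          (Fin.cons y u : Fin (n+1) → ℕ) j = 2 ∨ (Fin.cons y u : Fin (n+1) → ℕ) j = 3 := by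
      intro y hy hu j
      refine Fin.cases ?_ ?_ j
      · simpa using hy
      · intro i; simpa using hu i
    rintro (⟨rfl, hmem, hineq⟩ | ⟨rfl, a', rfl, hmem, hineq⟩ | ⟨rfl, b', rfl, hmem, hineq⟩) <;>
      refine ⟨consmem _ (by norm_num) hmem, fun m => ?_⟩ <;>
      · cases m with
        | zero => simp [cnt_zero]
        | succ m =>
          have := hineq m
          simp only [cnt_cons]
          norm_num
          omega


def YF : (n : ℕ) → ℕ → ℕ → Finset (Fin n → ℕ)
  | 0, _, _ => {![]}
  | n + 1, a, b =>
      ((YF n (a + 1) b).image (Fin.cons 1)) ∪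
      (if a = 0 then ∅ else (YF n (a - 1) (b + 1)).image (Fin.cons 2)) ∪
      (if b = 0 then ∅ else (YF n a (b - 1)).image (Fin.cons 3))

lemma YF_succ (n a b : ℕ) : YF (n + 1) a b =
      ((YF n (a + 1) b).image (Fin.cons 1)) ∪
      (if a = 0 then ∅ else (YF n (a - 1) (b + 1)).image (Fin.cons 2)) ∪
      (if b = 0 then ∅ else (YF n a (b - 1)).image (Fin.cons 3)) := by
  simp only [YF]

lemma cons_mem_image {n : ℕ} (x y : ℕ) (u : Fin n → ℕ) (s : Finset (Fin n → ℕ)) :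
    (Fin.cons x u : Fin (n + 1) → ℕ) ∈ s.image (Fin.cons y) ↔ x = y ∧ u ∈ s := by
  constructor
  · intro h
    obtain ⟨v, hv, hve⟩ := Finset.mem_image.1 h
    have h0 := congrFun hve 0
    simp only [Fin.cons_zero] at h0
    have ht := congrArg Fin.tail hve
    simp only [Fin.tail_cons] at ht
    exact ⟨h0.symm, ht ▸ hv⟩
  · rintro ⟨rfl, hu⟩
    exact Finset.mem_image.2 ⟨u, hu, rfl⟩

lemma fin_cons_inj {n : ℕ} (x : ℕ) :
    Function.Injective (fun u : Fin n → ℕ => (Fin.cons x u : Fin (n + 1) → ℕ)) := by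
  intro u v h
  simpa using congrArg Fin.tail h

lemma mem_YF : ∀ (n a b : ℕ) (w : Fin n → ℕ), w ∈ YF n a b ↔ QW a b w := by
  intro n
  induction n with
  | zero =>
    intro a b w
    constructor
    · intro _
      exact ⟨fun j => j.elim0, fun m => by simp [cnt]⟩
    · intro _
      simp only [YF, Finset.mem_singleton]
      exact Subsingleton.elim _ _
  | succ n ih =>
    intro a b w
    obtain ⟨x, u, rfl⟩ : ∃ x u, w = Fin.cons x u := ⟨w 0, Fin.tail w, (Fin.cons_self_tail w).symm⟩
    rw [QW_cons]
    have e1 : ((Fin.cons x u : Fin (n+1) → ℕ) ∈ (YF n (a + 1) b).image (Fin.cons 1)) ↔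
        (x = 1 ∧ QW (a + 1) b u) := by
      rw [cons_mem_image, ih]
    have e2 : ((Fin.cons x u : Fin (n+1) → ℕ) ∈
        (if a = 0 then ∅ else (YF n (a - 1) (b + 1)).image (Fin.cons 2))) ↔
        (x = 2 ∧ ∃ a', a = a' + 1 ∧ QW a' (b + 1) u) := by
      cases a with
      | zero => simp
      | succ a' =>
        rw [if_neg (Nat.succ_ne_zero a'), Nat.succ_sub_one, cons_mem_image, ih]
        constructor
        · rintro ⟨hx, h⟩
          exact ⟨hx, a', rfl, h⟩
        · rintro ⟨hx, a'', heq, h⟩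
          obtain rfl : a'' = a' := by omega
          exact ⟨hx, h⟩
    have e3 : ((Fin.cons x u : Fin (n+1) → ℕ) ∈
        (if b = 0 then ∅ else (YF n a (b - 1)).image (Fin.cons 3))) ↔
        (x = 3 ∧ ∃ b', b = b' + 1 ∧ QW a b' u) := by
      cases b with
      | zero => simp
      | succ b' =>
        rw [if_neg (Nat.succ_ne_zero b'), Nat.succ_sub_one, cons_mem_image, ih]
        constructor
        · rintro ⟨hx, h⟩
          exact ⟨hx, b', rfl, h⟩
        · rintro ⟨hx, b'', heq, h⟩
          obtain rfl : b'' = b' := by omega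
          exact ⟨hx, h⟩
    rw [YF_succ]
    constructor
    · intro h
      rcases Finset.mem_union.1 h with h | h
      · rcases Finset.mem_union.1 h with h | h
        · exact Or.inl (e1.1 h)
        · exact Or.inr (Or.inl (e2.1 h))
      · exact Or.inr (Or.inr (e3.1 h))
    · rintro (h | h | h)
      · exact Finset.mem_union.2 (Or.inl (Finset.mem_union.2 (Or.inl (e1.2 h))))
      · exact Finset.mem_union.2 (Or.inl (Finset.mem_union.2 (Or.inr (e2.2 h))))
      · exact Finset.mem_union.2 (Or.inr (e3.2 h))

lemma disj_img_fin {n : ℕ} (x y : ℕ) (hxy : x ≠ y) (s t : Finset (Fin n → ℕ)) :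
    Disjoint (s.image (fun u => (Fin.cons x u : Fin (n + 1) → ℕ)))
      (t.image (fun u => (Fin.cons y u : Fin (n + 1) → ℕ))) := by
  rw [Finset.disjoint_left]
  rintro w hw hw'
  obtain ⟨u, _, rfl⟩ := Finset.mem_image.1 hw
  obtain ⟨v, _, hv⟩ := Finset.mem_image.1 hw'
  have := congrFun hv 0
  simp only [Fin.cons_zero] at this
  exact hxy this.symm

lemma YF_card (n a b : ℕ) : (YF (n + 1) a b).card =
    (YF n (a + 1) b).card + (if a = 0 then 0 else (YF n (a - 1) (b + 1)).card) +
      (if b = 0 then 0 else (YF n a (b - 1)).card) := by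
  rw [YF_succ]
  have d1 : Disjoint ((YF n (a + 1) b).image (Fin.cons 1) : Finset (Fin (n + 1) → ℕ))
      (if a = 0 then ∅ else (YF n (a - 1) (b + 1)).image (Fin.cons 2)) := by
    by_cases h0 : a = 0
    · simp [h0]
    · rw [if_neg h0]
      exact disj_img_fin _ _ (by norm_num) _ _
  have d2 : Disjoint ((((YF n (a + 1) b).image (Fin.cons 1) : Finset (Fin (n + 1) → ℕ))) ∪
      (if a = 0 then ∅ else (YF n (a - 1) (b + 1)).image (Fin.cons 2)))
      (if b = 0 then ∅ else (YF n a (b - 1)).image (Fin.cons 3)) := by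
    by_cases h0 : b = 0
    · simp [h0]
    · rw [if_neg h0, Finset.disjoint_union_left]
      refine ⟨disj_img_fin _ _ (by norm_num) _ _, ?_⟩
      by_cases h1 : a = 0
      · simp [h1]
      · rw [if_neg h1]
        exact disj_img_fin _ _ (by norm_num) _ _
  rw [Finset.card_union_of_disjoint d2, Finset.card_union_of_disjoint d1,
    Finset.card_image_of_injective _ (fin_cons_inj 1)]
  congr 1
  · congr 1
    by_cases h0 : a = 0
    · simp [h0]
    · rw [if_neg h0, if_neg h0, Finset.card_image_of_injective _ (fin_cons_inj 2)]
  · by_cases h0 : b = 0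
    · simp [h0]
    · rw [if_neg h0, if_neg h0, Finset.card_image_of_injective _ (fin_cons_inj 3)]

lemma sum_shift (g : ℕ → ℕ) (c j : ℕ) :
    ∑ i ∈ range (c + 1), g (i + j) = (∑ i ∈ range c, g (i + j + 1)) + g j := by
  rw [Finset.sum_range_succ']
  congr 1
  · exact Finset.sum_congr rfl fun i _ => congrArg g (by omega)
  · exact congrArg g (Nat.zero_add j)

lemma key : ∀ n a b : ℕ, (YF n a b).card =
    ∑ j ∈ range (b + 1), ∑ i ∈ range (a + 1), (LF n (i + j)).card := by
  intro n
  induction n with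
  | zero =>
    intro a b
    have hYF : (YF 0 a b).card = 1 := by simp [YF]
    have hLF0 : ∀ k, (LF 0 k).card = if k = 0 then 1 else 0 := by
      intro k
      by_cases hk : k = 0 <;> simp [LF, hk]
    have inner : ∀ j, (∑ i ∈ range (a + 1), (LF 0 (i + j)).card) = if j = 0 then 1 else 0 := by
      intro j
      rw [Finset.sum_range_succ']
      have h1 : ∑ i ∈ range a, (LF 0 (i + 1 + j)).card = 0 :=
        Finset.sum_eq_zero fun i _ => by rw [hLF0]; simp
      rw [h1, hLF0]
      simp
    rw [hYF, Finset.sum_congr rfl fun j _ => inner j, Finset.sum_range_succ']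
    have h2 : ∑ j ∈ range b, (if j + 1 = 0 then 1 else 0) = 0 :=
      Finset.sum_eq_zero fun j _ => by simp
    rw [h2]
    simp
  | succ n ih =>
    intro a b
    rw [YF_card n a b, ih (a + 1) b]
    have iha : (if a = 0 then 0 else (YF n (a - 1) (b + 1)).card)
        = (if a = 0 then 0 else
            ∑ j ∈ range (b + 2), ∑ i ∈ range a, (LF n (i + j)).card) := by
      cases a with
      | zero => rfl
      | succ a' =>
        simp only [if_neg (Nat.succ_ne_zero a'), Nat.succ_sub_one]
        exact ih a' (b + 1)
    have ihb : (if b = 0 then 0 else (YF n a (b - 1)).card)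
        = (if b = 0 then 0 else ∑ j ∈ range b, ∑ i ∈ range (a + 1), (LF n (i + j)).card) := by
      cases b with
      | zero => rfl
      | succ b' =>
        simp only [if_neg (Nat.succ_ne_zero b'), Nat.succ_sub_one]
        have := ih a b'
        rwa [show b' + 1 = b' + 1 from rfl] at this
    rw [iha, ihb]
    -- expand RHS using LF_card
    have hR : ∑ j ∈ range (b + 1), ∑ i ∈ range (a + 1), (LF (n + 1) (i + j)).card
        = (∑ j ∈ range (b + 1), ∑ i ∈ range (a + 1), (LF n (i + j + 1)).card)
          + (∑ j ∈ range (b + 1), ∑ i ∈ range (a + 1), (LF n (i + j)).card)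
          + ((∑ j ∈ range b, (LF n j).card)
             + ∑ j ∈ range (b + 1), ∑ i ∈ range a, (LF n (i + j)).card) := by
      have expand : ∀ j, ∑ i ∈ range (a + 1), (LF (n + 1) (i + j)).card
          = (∑ i ∈ range (a + 1), (LF n (i + j + 1)).card)
            + (∑ i ∈ range (a + 1), (LF n (i + j)).card)
            + (∑ i ∈ range (a + 1), if i + j = 0 then 0 else (LF n (i + j - 1)).card) := by
        intro j
        rw [← Finset.sum_add_distrib, ← Finset.sum_add_distrib]
        exact Finset.sum_congr rfl fun i _ => LF_card n (i + j)
      rw [Finset.sum_congr rfl fun j _ => expand j, Finset.sum_add_distrib,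
        Finset.sum_add_distrib]
      congr 1
      -- remains: ∑_j ∑_i ite … = E + D
      have innerH : ∀ j, (∑ i ∈ range (a + 1), if i + j = 0 then 0 else (LF n (i + j - 1)).card)
          = (if j = 0 then 0 else (LF n (j - 1)).card) + ∑ i ∈ range a, (LF n (i + j)).card := by
        intro j
        rw [Finset.sum_range_succ']
        have h1 : ∀ i ∈ range a, (if i + 1 + j = 0 then 0 else (LF n (i + 1 + j - 1)).card)
            = (LF n (i + j)).card := by
          intro i _
          rw [if_neg (by omega)]
          exact congrArg (fun k => (LF n k).card) (by omega)
        rw [Finset.sum_congr rfl h1]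
        have h2 : (if 0 + j = 0 then 0 else (LF n (0 + j - 1)).card)
            = (if j = 0 then 0 else (LF n (j - 1)).card) := by
          simp
        rw [h2]
        omega
      rw [Finset.sum_congr rfl fun j _ => innerH j, Finset.sum_add_distrib]
      congr 1
      rw [Finset.sum_range_succ']
      have h3 : ∀ j ∈ range b, (if j + 1 = 0 then 0 else (LF n (j + 1 - 1)).card)
          = (LF n j).card := by
        intro j _
        rw [if_neg (by omega)]
        exact congrArg (fun k => (LF n k).card) (by omega)
      rw [Finset.sum_congr rfl h3]
      simp
    rw [hR]
    -- expand first LHS term : ∑_j ∑_{i ≤ a+1} f (i+j) = ∑_j ∑_{i ≤ a} f (i+j+1) + ∑_j f j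
    have hL1 : ∑ j ∈ range (b + 1), ∑ i ∈ range (a + 1 + 1), (LF n (i + j)).card
        = (∑ j ∈ range (b + 1), ∑ i ∈ range (a + 1), (LF n (i + j + 1)).card)
          + ∑ j ∈ range (b + 1), (LF n j).card := by
      rw [← Finset.sum_add_distrib]
      refine Finset.sum_congr rfl fun j _ => ?_
      have := sum_shift (fun k => (LF n k).card) (a + 1) j
      simpa using this
    rw [hL1]
    -- now pure sum algebra; case split
    rcases b with _ | b'
    · rcases a with _ | a'
      · simp [Finset.sum_range_one]
      · rw [if_neg (show a' + 1 ≠ 0 by omega), if_pos rfl]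
        -- goal: W + T + Ia + 0 = W + A + (0 + D)
        have hT : ∑ j ∈ range (0 + 1), (LF n j).card = (LF n 0).card := by
          simp [Finset.sum_range_one]
        have hIa : ∑ j ∈ range (0 + 2), ∑ i ∈ range (a' + 1), (LF n (i + j)).card
            = (∑ i ∈ range (a' + 1), (LF n i).card)
              + ∑ i ∈ range (a' + 1), (LF n (i + 1)).card := by
          rw [show (0:ℕ) + 2 = 1 + 1 from rfl, Finset.sum_range_succ, Finset.sum_range_one]
          congr 1
        have hA : ∑ j ∈ range (0 + 1), ∑ i ∈ range (a' + 1 + 1), (LF n (i + j)).card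
            = (∑ i ∈ range (a' + 1), (LF n (i + 1)).card) + (LF n 0).card := by
          rw [Finset.sum_range_one]
          have := sum_shift (fun k => (LF n k).card) (a' + 1) 0
          simpa using this
        have hD : ∑ j ∈ range (0 + 1), ∑ i ∈ range (a' + 1), (LF n (i + j)).card
            = ∑ i ∈ range (a' + 1), (LF n i).card := by
          rw [Finset.sum_range_one]
          exact Finset.sum_congr rfl fun i _ => congrArg (fun k => (LF n k).card) (by omega)
        rw [hT, hIa, hA, hD, Finset.sum_range_zero]
        omega
    · rcases a with _ | a'
      · rw [if_pos rfl, if_neg (show b' + 1 ≠ 0 by omega)]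
        -- inner sums over range 1
        have h1 : ∀ (y : ℕ), ∑ j ∈ range y, ∑ i ∈ range (0 + 1), (LF n (i + j)).card
            = ∑ j ∈ range y, (LF n j).card := fun y =>
          Finset.sum_congr rfl fun j _ => by
            rw [Finset.sum_range_one]
            exact congrArg (fun k => (LF n k).card) (by omega)
        rw [h1, h1]
        have hD : ∑ j ∈ range (b' + 1 + 1), ∑ i ∈ range 0, (LF n (i + j)).card = 0 := by
          simp
        rw [hD]
        omega
      · rw [if_neg (show a' + 1 ≠ 0 by omega), if_neg (show b' + 1 ≠ 0 by omega)]
        -- abbreviations by rewriting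
        have hT : ∑ j ∈ range (b' + 1 + 1), (LF n j).card
            = (∑ j ∈ range (b' + 1), (LF n j).card) + (LF n (b' + 1)).card :=
          Finset.sum_range_succ _ _
        have hIa : ∑ j ∈ range (b' + 1 + 2), ∑ i ∈ range (a' + 1), (LF n (i + j)).card
            = (∑ j ∈ range (b' + 1 + 1), ∑ i ∈ range (a' + 1), (LF n (i + j)).card)
              + ∑ i ∈ range (a' + 1), (LF n (i + (b' + 1) + 1)).card := by
          rw [show b' + 1 + 2 = (b' + 1 + 1) + 1 from rfl, Finset.sum_range_succ]
          congr 1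
        have hA : ∑ j ∈ range (b' + 1 + 1), ∑ i ∈ range (a' + 1 + 1), (LF n (i + j)).card
            = (∑ j ∈ range (b' + 1), ∑ i ∈ range (a' + 1 + 1), (LF n (i + j)).card)
              + ((∑ i ∈ range (a' + 1), (LF n (i + (b' + 1) + 1)).card)
                 + (LF n (b' + 1)).card) := by
          rw [Finset.sum_range_succ]
          congr 1
          have := sum_shift (fun k => (LF n k).card) (a' + 1) (b' + 1)
          rw [this]
        rw [hT, hIa, hA]
        omega

/-- Paths with steps (1,1),(1,-1),(1,0) encoded by their height increments,
starting at height `h`, staying weakly above the x-axis and ending at height 0. -/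
noncomputable def latticeCount (len : ℕ) (h : ℕ) : ℕ :=
  Nat.card {l : List ℤ // l.length = len ∧ (∀ x ∈ l, x = 1 ∨ x = -1 ∨ x = 0) ∧
    (∀ m, 0 ≤ (h : ℤ) + (l.take m).sum) ∧ (h : ℤ) + l.sum = 0}

/-- The `n`-th Motzkin number, as the number of Motzkin paths of length `n`. -/
noncomputable def motzkin (n : ℕ) : ℕ := latticeCount n 0

/-- A Yamanouchi word of length `n` on the alphabet `{1,…,k}`: in every prefix, the
number of occurrences of `i` is at least the number of occurrences of `i+1`. -/
def IsYamanouchi (k : ℕ) {n : ℕ} (w : Fin n → ℕ) : Prop :=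
  (∀ j, 1 ≤ w j ∧ w j ≤ k) ∧
  ∀ (m i : ℕ), 1 ≤ i →
    (Finset.univ.filter fun j : Fin n => j.1 < m ∧ w j = i + 1).card ≤
    (Finset.univ.filter fun j : Fin n => j.1 < m ∧ w j = i).card

lemma latticeCount_eq (len h : ℕ) : latticeCount len h = (LF len h).card := by
  rw [latticeCount]
  have e : Nat.card {l : List ℤ // l.length = len ∧ (∀ x ∈ l, x = 1 ∨ x = -1 ∨ x = 0) ∧
      (∀ m, 0 ≤ (h : ℤ) + (l.take m).sum) ∧ (h : ℤ) + l.sum = 0}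
      = Nat.card {l : List ℤ // l ∈ LF len h} :=
    Nat.card_congr (Equiv.subtypeEquivRight fun l => (mem_LF len h l).symm)
  rw [e]
  exact Nat.card_eq_finsetCard _

lemma isY_iff {n : ℕ} (w : Fin n → ℕ) : IsYamanouchi 3 w ↔ QW 0 0 w := by
  constructor
  · rintro ⟨h1, h2⟩
    refine ⟨fun j => by have := h1 j; omega, fun m => ?_⟩
    have t1 := h2 m 1 le_rfl
    have t2 := h2 m 2 (by norm_num)
    norm_num at t1 t2
    constructor
    · simpa [cnt] using t1
    · simpa [cnt] using t2
  · rintro ⟨h1, h2⟩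
    refine ⟨fun j => by have := h1 j; omega, ?_⟩
    intro m i hi
    by_cases hi1 : i = 1
    · subst hi1
      have := (h2 m).1
      simp only [cnt, Nat.zero_add] at this
      norm_num
      exact this
    by_cases hi2 : i = 2
    · subst hi2
      have := (h2 m).2
      simp only [cnt, Nat.zero_add] at this
      norm_num
      exact this
    have h3 : 3 ≤ i := by omega
    have hempty : (Finset.univ.filter fun j : Fin n => j.1 < m ∧ w j = i + 1) = ∅ := by
      rw [Finset.filter_eq_empty_iff]
      rintro j - ⟨-, hj⟩
      have := h1 j
      omega
    rw [hempty, Finset.card_empty]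
    exact Nat.zero_le _

/-- Yamanouchi words of length `n` on `{1,2,3}` are counted by the Motzkin numbers. -/
theorem yamanouchi_card (n : ℕ) :
    Nat.card {w : Fin n → ℕ // IsYamanouchi 3 w} = motzkin n := by
  have e1 : Nat.card {w : Fin n → ℕ // IsYamanouchi 3 w} = (YF n 0 0).card := by
    have e : Nat.card {w : Fin n → ℕ // IsYamanouchi 3 w}
        = Nat.card {w : Fin n → ℕ // w ∈ YF n 0 0} :=
      Nat.card_congr (Equiv.subtypeEquivRight fun w => (isY_iff w).trans (mem_YF n 0 0 w).symm)
    rw [e]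
    exact Nat.card_eq_finsetCard _
  rw [e1, key n 0 0, motzkin, latticeCount_eq]
  simp
end

section
/- The coefficient of x^{n} in x^2*M(x)^3 equals m_{n+2} - 2*m_{n+1}, where M is the Motzkin generating function. -/
/-- The path predicate. -/
def MP (len h : ℕ) (l : List ℤ) : Prop :=
  l.length = len ∧ (∀ x ∈ l, x = 1 ∨ x = -1 ∨ x = 0) ∧
    (∀ m, 0 ≤ (h : ℤ) + (l.take m).sum) ∧ (h : ℤ) + l.sum = 0

lemma MP_cons (n h : ℕ) (a : ℤ) (t : List ℤ) (h' : ℕ) (ha : a = 1 ∨ a = -1 ∨ a = 0)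
    (hh : (h : ℤ) + a = (h' : ℤ)) :
    MP (n + 1) h (a :: t) ↔ MP n h' t := by
  unfold MP
  constructor
  · rintro ⟨h1, h2, h3, h4⟩
    refine ⟨by simpa using h1, fun x hx => h2 x (List.mem_cons_of_mem _ hx), fun m => ?_, ?_⟩
    · have := h3 (m + 1)
      simp only [List.take_succ_cons, List.sum_cons] at this
      linarith
    · simp only [List.sum_cons] at h4; linarith
  · rintro ⟨h1, h2, h3, h4⟩
    refine ⟨by simpa using h1, ?_, fun m => ?_, ?_⟩
    · intro x hx
      rcases List.mem_cons.mp hx with rfl | hx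
      · exact ha
      · exact h2 x hx
    · cases m with
      | zero => simpa using Int.natCast_nonneg h
      | succ m =>
        have := h3 m
        simp only [List.take_succ_cons, List.sum_cons]
        linarith
    · simp only [List.sum_cons]; linarith

lemma MP_zero (h : ℕ) (l : List ℤ) : MP 0 h l ↔ (l = [] ∧ h = 0) := by
  unfold MP
  constructor
  · rintro ⟨h1, _, _, h4⟩
    have : l = [] := List.length_eq_zero_iff.mp h1
    subst this
    simp at h4
    exact ⟨rfl, by exact_mod_cast h4⟩
  · rintro ⟨rfl, rfl⟩
    simp

lemma MP_finite (n h : ℕ) : {l : List ℤ | MP n h l}.Finite := by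
  have key : ∀ n : ℕ, {l : List ℤ | l.length = n ∧ ∀ x ∈ l, x = 1 ∨ x = -1 ∨ x = 0}.Finite := by
    intro n
    induction n with
    | zero =>
      apply Set.Finite.subset (Set.finite_singleton ([] : List ℤ))
      rintro l ⟨h1, -⟩
      simp [List.length_eq_zero_iff.mp h1]
    | succ n ih =>
      apply Set.Finite.subset (Set.Finite.image (fun p : ℤ × List ℤ => p.1 :: p.2)
        (Set.Finite.prod (Set.toFinite ({1, -1, 0} : Set ℤ)) ih))
      rintro l ⟨h1, h2⟩
      match l with
      | a :: t =>
        exact ⟨(a, t), ⟨by simpa using h2 a (by simp), by simpa using h1,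
          fun x hx => h2 x (List.mem_cons_of_mem _ hx)⟩, rfl⟩
  exact Set.Finite.subset (key n) (fun l hl => ⟨hl.1, hl.2.1⟩)

lemma cons_image_disjoint (a b : ℤ) (hab : a ≠ b) (S T : Set (List ℤ)) :
    Disjoint (List.cons a '' S) (List.cons b '' T) := by
  rw [Set.disjoint_left]
  rintro l ⟨t, -, rfl⟩ ⟨t', -, hl⟩
  exact hab (List.cons.injEq .. ▸ hl : _ ∧ _).1.symm

lemma decomp_pos (n h : ℕ) :
    {l | MP (n+1) (h+1) l} =
      (List.cons 1 '' {l | MP n (h+2) l}) ∪ (List.cons (-1) '' {l | MP n h l}) ∪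
        (List.cons 0 '' {l | MP n (h+1) l}) := by
  ext l
  simp only [Set.mem_union, Set.mem_image, Set.mem_setOf_eq]
  constructor
  · intro hl
    match l, hl with
    | a :: t, hl =>
      rcases hl.2.1 a (by simp) with rfl | rfl | rfl
      · exact Or.inl <| Or.inl ⟨t, (MP_cons n (h+1) 1 t (h+2) (by norm_num) (by push_cast; try ring)).mp hl, rfl⟩
      · exact Or.inl <| Or.inr ⟨t, (MP_cons n (h+1) (-1) t h (by norm_num) (by push_cast; try ring)).mp hl, rfl⟩
      · exact Or.inr ⟨t, (MP_cons n (h+1) 0 t (h+1) (by norm_num) (by push_cast; try ring)).mp hl, rfl⟩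
  · rintro ((⟨t, ht, rfl⟩ | ⟨t, ht, rfl⟩) | ⟨t, ht, rfl⟩)
    · exact (MP_cons n (h+1) 1 t (h+2) (by norm_num) (by push_cast; try ring)).mpr ht
    · exact (MP_cons n (h+1) (-1) t h (by norm_num) (by push_cast; try ring)).mpr ht
    · exact (MP_cons n (h+1) 0 t (h+1) (by norm_num) (by push_cast; try ring)).mpr ht

lemma decomp_zero (n : ℕ) :
    {l | MP (n+1) 0 l} =
      (List.cons 1 '' {l | MP n 1 l}) ∪ (List.cons 0 '' {l | MP n 0 l}) := by
  ext l
  simp only [Set.mem_union, Set.mem_image, Set.mem_setOf_eq]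
  constructor
  · intro hl
    match l, hl with
    | a :: t, hl =>
      rcases hl.2.1 a (by simp) with rfl | rfl | rfl
      · exact Or.inl ⟨t, (MP_cons n 0 1 t 1 (by norm_num) (by push_cast; try ring)).mp hl, rfl⟩
      · exact absurd (hl.2.2.1 1) (by simp)
      · exact Or.inr ⟨t, (MP_cons n 0 0 t 0 (by norm_num) (by push_cast; try ring)).mp hl, rfl⟩
  · rintro (⟨t, ht, rfl⟩ | ⟨t, ht, rfl⟩)
    · exact (MP_cons n 0 1 t 1 (by norm_num) (by push_cast; try ring)).mpr ht
    · exact (MP_cons n 0 0 t 0 (by norm_num) (by push_cast; try ring)).mpr ht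

lemma ncard_succ_pos (n h : ℕ) :
    {l | MP (n+1) (h+1) l}.ncard =
      {l | MP n (h+2) l}.ncard + {l | MP n h l}.ncard + {l | MP n (h+1) l}.ncard := by
  rw [decomp_pos]
  rw [Set.ncard_union_eq (by
        apply Set.disjoint_union_left.mpr
        exact ⟨cons_image_disjoint 1 0 (by norm_num) _ _, cons_image_disjoint (-1) 0 (by norm_num) _ _⟩)
      (((MP_finite n (h+2)).image _).union ((MP_finite n h).image _)) ((MP_finite n (h+1)).image _),
    Set.ncard_union_eq (cons_image_disjoint 1 (-1) (by norm_num) _ _)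
      ((MP_finite n (h+2)).image _) ((MP_finite n h).image _),
    Set.ncard_image_of_injective _ (List.cons_injective),
    Set.ncard_image_of_injective _ (List.cons_injective),
    Set.ncard_image_of_injective _ (List.cons_injective)]

lemma ncard_succ_zero (n : ℕ) :
    {l | MP (n+1) 0 l}.ncard = {l | MP n 1 l}.ncard + {l | MP n 0 l}.ncard := by
  rw [decomp_zero]
  rw [Set.ncard_union_eq (cons_image_disjoint 1 0 (by norm_num) _ _)
      ((MP_finite n 1).image _) ((MP_finite n 0).image _),
    Set.ncard_image_of_injective _ (List.cons_injective),
    Set.ncard_image_of_injective _ (List.cons_injective)]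

lemma ncard_zero (h : ℕ) : {l | MP 0 h l}.ncard = if h = 0 then 1 else 0 := by
  by_cases hh : h = 0
  · subst hh
    simp only [if_pos rfl]
    have : {l : List ℤ | MP 0 0 l} = {[]} := by
      ext l; simp [MP_zero]
    rw [this, Set.ncard_singleton, if_pos trivial]
  · simp only [if_neg hh]
    have : {l : List ℤ | MP 0 h l} = ∅ := by
      ext l; simp [MP_zero, hh]
    rw [this, Set.ncard_empty]
open PowerSeries

def mu : ℕ → ℕ
  | 0 => 1
  | 1 => 1
  | n+2 => mu (n+1) + ∑ i ∈ (Finset.range (n+1)).attach, mu i.1 * mu (n - i.1)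
decreasing_by
  all_goals simp_wf
  all_goals try omega
  all_goals (have := i.2; simp only [Finset.mem_range] at this; omega)

lemma mu_zero : mu 0 = 1 := by rw [mu]
lemma mu_one : mu 1 = 1 := by rw [mu]
lemma mu_add_two (n : ℕ) :
    mu (n+2) = mu (n+1) + ∑ i ∈ Finset.range (n+1), mu i * mu (n - i) := by
  rw [mu, Finset.sum_attach (Finset.range (n+1)) (fun i => mu i * mu (n - i))]

noncomputable def NN : PowerSeries ℤ := PowerSeries.mk fun n => (mu n : ℤ)

lemma coeff_NN (n : ℕ) : PowerSeries.coeff (R := ℤ) n NN = (mu n : ℤ) := by simp [NN]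

lemma eqN : NN = 1 + X * NN + X ^ 2 * NN ^ 2 := by
  ext k
  rcases k with _ | _ | n
  · have : (PowerSeries.coeff (R := ℤ) 0) (X ^ 2 * NN ^ 2) = 0 := by
      rw [PowerSeries.coeff_zero_eq_constantCoeff, map_mul, map_pow, constantCoeff_X]
      ring
    rw [coeff_NN, mu_zero, map_add, map_add, this]
    simp
  · have h2 : (PowerSeries.coeff (R := ℤ) 1) (X ^ 2 * NN ^ 2) = 0 := by
      rw [show (X:PowerSeries ℤ)^2 * NN^2 = X * (X * NN^2) by ring,
        PowerSeries.coeff_succ_X_mul, PowerSeries.coeff_zero_eq_constantCoeff, map_mul,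
        constantCoeff_X]
      ring
    rw [coeff_NN, mu_one, map_add, map_add, h2, PowerSeries.coeff_succ_X_mul, coeff_NN, mu_zero]
    simp
  · have h1 : (PowerSeries.coeff (R := ℤ) (n+2)) (1 : PowerSeries ℤ) = 0 := by simp
    have h2 : (PowerSeries.coeff (R := ℤ) (n+2)) (X * NN) = (mu (n+1) : ℤ) := by
      rw [PowerSeries.coeff_succ_X_mul, coeff_NN]
    have h3 : (PowerSeries.coeff (R := ℤ) (n+2)) (X ^ 2 * NN ^ 2) =
        ∑ i ∈ Finset.range (n+1), (mu i : ℤ) * mu (n - i) := by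
      rw [PowerSeries.coeff_X_pow_mul, sq,
        PowerSeries.coeff_mul, Finset.Nat.sum_antidiagonal_eq_sum_range_succ_mk]
      simp [coeff_NN]
    rw [coeff_NN, map_add, map_add, h1, h2, h3, mu_add_two]
    push_cast
    ring

noncomputable def cc (n h : ℕ) : ℤ := PowerSeries.coeff (R := ℤ) n (X ^ h * NN ^ (h+1))

lemma cc_zero (h : ℕ) : cc 0 h = if h = 0 then 1 else 0 := by
  unfold cc
  rcases h with _ | h
  · simp [coeff_NN, mu_zero]
  · rw [PowerSeries.coeff_zero_eq_constantCoeff, map_mul, map_pow, constantCoeff_X]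
    simp

lemma cc_succ_zero (n : ℕ) : cc (n+1) 0 = cc n 1 + cc n 0 := by
  unfold cc
  have key : (X:PowerSeries ℤ)^0 * NN^(0+1) = X * (X^1*NN^(1+1) + X^0*NN^(0+1)) + 1 := by
    conv_lhs => rw [show (X:PowerSeries ℤ)^0 * NN^(0+1) = NN by ring, eqN]
    ring
  conv_lhs => rw [key]
  rw [map_add, PowerSeries.coeff_succ_X_mul, map_add]
  have h1 : (PowerSeries.coeff (R := ℤ) (n+1)) (1 : PowerSeries ℤ) = 0 := by simp
  rw [h1]
  ring

lemma cc_succ_succ (n h : ℕ) : cc (n+1) (h+1) = cc n (h+2) + cc n h + cc n (h+1) := by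
  unfold cc
  have key : (X:PowerSeries ℤ)^(h+1) * NN^(h+1+1) =
      X * (X^(h+2) * NN^(h+2+1) + X^h * NN^(h+1) + X^(h+1) * NN^(h+1+1)) := by
    calc (X:PowerSeries ℤ)^(h+1) * NN^(h+1+1)
        = X^(h+1) * NN^(h+1) * (1 + X * NN + X^2 * NN^2) := by rw [← eqN]; ring
      _ = _ := by ring
  conv_lhs => rw [key]
  rw [PowerSeries.coeff_succ_X_mul, map_add, map_add]

lemma ncard_eq_cc (n h : ℕ) : ({l | MP n h l}.ncard : ℤ) = cc n h := by
  induction n generalizing h with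
  | zero =>
    rw [ncard_zero, cc_zero]
    split_ifs <;> simp
  | succ n ih =>
    rcases h with _ | h
    · rw [ncard_succ_zero, cc_succ_zero]
      push_cast
      rw [ih 1, ih 0]
    · rw [ncard_succ_pos, cc_succ_succ]
      push_cast
      rw [ih (h+2), ih h, ih (h+1)]

lemma latticeCount_eq_s16 (n h : ℕ) : latticeCount n h = {l | MP n h l}.ncard :=
  Nat.card_coe_set_eq _

lemma motzkin_eq_mu (n : ℕ) : motzkin n = mu n := by
  have h1 : (motzkin n : ℤ) = cc n 0 := by
    rw [motzkin, latticeCount_eq_s16, ncard_eq_cc]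
  have h2 : cc n 0 = (mu n : ℤ) := by
    unfold cc
    rw [pow_zero, pow_one, one_mul, coeff_NN]
  exact_mod_cast h1.trans h2

open PowerSeries in
/-- The coefficient of `x^n` in `x² M(x)³` is `m_{n+2} - 2 m_{n+1}`. -/
theorem coeff_x2M3 (n : ℕ) :
    PowerSeries.coeff (R := ℤ) n (X ^ 2 * (PowerSeries.mk fun m => (motzkin m : ℤ)) ^ 3) =
      (motzkin (n + 2) : ℤ) - 2 * motzkin (n + 1) := by
  have hM : (PowerSeries.mk fun m => (motzkin m : ℤ)) = NN := by
    ext m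
    simp [coeff_NN, motzkin_eq_mu]
  rw [hM]
  have hgoal : PowerSeries.coeff (R := ℤ) n (X ^ 2 * NN ^ 3) = cc n 2 := rfl
  rw [hgoal]
  have hc0 : ∀ k, cc k 0 = (mu k : ℤ) := fun k => by
    unfold cc; rw [pow_zero, pow_one, one_mul, coeff_NN]
  have h1 := cc_succ_zero n
  have h1' := cc_succ_zero (n+1)
  have h2 := cc_succ_succ n 0
  norm_num at h2
  simp only [hc0] at h1 h1' h2
  simp only [motzkin_eq_mu]
  linarith
end
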